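/- For a nondegenerate model of walk and a point P of the kernel curve Ē_t, the following are equivalent: (i) P is a singular point of Ē_t; (ii) P is both the unique point of Ē_t sharing its first coordinate and the unique point of Ē_t sharing its second coordinate (i.e., P is fixed by both the vertical switch ι₁ and the horizontal switch ι₂ of Ē_t). -/

import Mathlib

open MvPolynomial

noncomputable section

variable (d : ℤ → ℤ → ℝ) (t : ℝ)

/-- The kernel polynomial `K(x,y,t) = xy(1 - t·Σ_{(i,j)∈{-1,0,1}²} d_{i,j} x^i y^j)`
as an element of `ℂ[x,y] = MvPolynomial (Fin 2) ℂ` (variable `0` is `x`, variable `1` is `y`). -/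
def kernelK : MvPolynomial (Fin 2) ℂ :=
  X 0 * X 1 - C ((t : ℝ) : ℂ) *
    ∑ i ∈ Finset.range 3, ∑ j ∈ Finset.range 3,
      C ((d ((i : ℤ) - 1) ((j : ℤ) - 1) : ℝ) : ℂ) * X 0 ^ i * X 1 ^ j

/-- The standing hypotheses: the weights `d_{i,j}` for `(i,j) ∈ {-1,0,1}²` lie in `[0,1]`
and sum to `1`, `t ∈ (0,1)`, and `t` is transcendental over `ℚ(d_{i,j})`, i.e. no nonzero
polynomial with coefficients in the subfield of `ℝ` generated by the `d_{i,j}` vanishes at `t`. -/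
def WalkHyp : Prop :=
  (∀ i ∈ ({-1, 0, 1} : Set ℤ), ∀ j ∈ ({-1, 0, 1} : Set ℤ), 0 ≤ d i j ∧ d i j ≤ 1) ∧
  (∑ i ∈ ({-1, 0, 1} : Finset ℤ), ∑ j ∈ ({-1, 0, 1} : Finset ℤ), d i j = 1) ∧
  (0 < t ∧ t < 1) ∧
  (∀ p : Polynomial ℝ,
      (∀ n, p.coeff n ∈
        Subfield.closure
          {x : ℝ | ∃ i ∈ ({-1, 0, 1} : Set ℤ), ∃ j ∈ ({-1, 0, 1} : Set ℤ), x = d i j}) →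
      Polynomial.eval t p = 0 → p = 0)

/-- The model is degenerate if `K` is reducible in `ℂ[x,y]`, or has degree `≤ 1` in `x`,
or degree `≤ 1` in `y`. -/
def Degenerate : Prop :=
  ¬ Irreducible (kernelK d t) ∨
    degreeOf 0 (kernelK d t) ≤ 1 ∨ degreeOf 1 (kernelK d t) ≤ 1

/-- The bihomogenized kernel
`K̄(x₀,x₁,y₀,y₁) = x₀x₁y₀y₁ - t Σ_{i,j=0}^{2} d_{i-1,j-1} x₀^i x₁^{2-i} y₀^j y₁^{2-j}`,
with variables `0 ↦ x₀`, `1 ↦ x₁`, `2 ↦ y₀`, `3 ↦ y₁`. -/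
def kernelKbar : MvPolynomial (Fin 4) ℂ :=
  X 0 * X 1 * X 2 * X 3 - C ((t : ℝ) : ℂ) *
    ∑ i ∈ Finset.range 3, ∑ j ∈ Finset.range 3,
      C ((d ((i : ℤ) - 1) ((j : ℤ) - 1) : ℝ) : ℂ) *
        X 0 ^ i * X 1 ^ (2 - i) * X 2 ^ j * X 3 ^ (2 - j)

/-- `([a:b],[c:e])` lies on the kernel curve `Ē_t ⊆ ℙ¹(ℂ)×ℙ¹(ℂ)`. -/
def OnKernelCurve (a b c e : ℂ) : Prop :=
  eval ![a, b, c, e] (kernelKbar d t) = 0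

/-- `([a:b],[c:e])` is a singular point of the kernel curve `Ē_t`: it lies on `Ē_t`
and all four partial derivatives of `K̄` vanish there. -/
def SingularAt (a b c e : ℂ) : Prop :=
  OnKernelCurve d t a b c e ∧
    ∀ k : Fin 4, eval ![a, b, c, e] (pderiv k (kernelKbar d t)) = 0

/-- `Ā₁(x₀,x₁)`: the coefficient of `y₀²` in `K̄`. -/
def Abar1 : MvPolynomial (Fin 2) ℂ :=
  -(C ((t : ℝ) : ℂ)) *
    (C ((d (-1) 1 : ℝ) : ℂ) * X 1 ^ 2 + C ((d 0 1 : ℝ) : ℂ) * X 0 * X 1 +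
      C ((d 1 1 : ℝ) : ℂ) * X 0 ^ 2)

/-- `B̄₁(x₀,x₁)`: the coefficient of `y₀y₁` in `K̄`. -/
def Bbar1 : MvPolynomial (Fin 2) ℂ :=
  X 0 * X 1 - C ((t : ℝ) : ℂ) *
    (C ((d (-1) 0 : ℝ) : ℂ) * X 1 ^ 2 + C ((d 0 0 : ℝ) : ℂ) * X 0 * X 1 +
      C ((d 1 0 : ℝ) : ℂ) * X 0 ^ 2)

/-- `C̄₁(x₀,x₁)`: the coefficient of `y₁²` in `K̄`. -/
def Cbar1 : MvPolynomial (Fin 2) ℂ :=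
  -(C ((t : ℝ) : ℂ)) *
    (C ((d (-1) (-1) : ℝ) : ℂ) * X 1 ^ 2 + C ((d 0 (-1) : ℝ) : ℂ) * X 0 * X 1 +
      C ((d 1 (-1) : ℝ) : ℂ) * X 0 ^ 2)

/-- The discriminant `Δ₁(x₀,x₁) = B̄₁² - 4Ā₁C̄₁`, homogeneous of degree 4. -/
def Delta1 : MvPolynomial (Fin 2) ℂ :=
  Bbar1 d t ^ 2 - 4 * Abar1 d t * Cbar1 d t

/-- `Ā₂(y₀,y₁)`: the coefficient of `x₀²` in `K̄`. -/
def Abar2 : MvPolynomial (Fin 2) ℂ :=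
  -(C ((t : ℝ) : ℂ)) *
    (C ((d 1 (-1) : ℝ) : ℂ) * X 1 ^ 2 + C ((d 1 0 : ℝ) : ℂ) * X 0 * X 1 +
      C ((d 1 1 : ℝ) : ℂ) * X 0 ^ 2)

/-- `B̄₂(y₀,y₁)`: the coefficient of `x₀x₁` in `K̄`. -/
def Bbar2 : MvPolynomial (Fin 2) ℂ :=
  X 0 * X 1 - C ((t : ℝ) : ℂ) *
    (C ((d 0 (-1) : ℝ) : ℂ) * X 1 ^ 2 + C ((d 0 0 : ℝ) : ℂ) * X 0 * X 1 +
      C ((d 0 1 : ℝ) : ℂ) * X 0 ^ 2)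

/-- `C̄₂(y₀,y₁)`: the coefficient of `x₁²` in `K̄`. -/
def Cbar2 : MvPolynomial (Fin 2) ℂ :=
  -(C ((t : ℝ) : ℂ)) *
    (C ((d (-1) (-1) : ℝ) : ℂ) * X 1 ^ 2 + C ((d (-1) 0 : ℝ) : ℂ) * X 0 * X 1 +
      C ((d (-1) 1 : ℝ) : ℂ) * X 0 ^ 2)

/-- The discriminant `Δ₂(y₀,y₁) = B̄₂² - 4Ā₂C̄₂`, homogeneous of degree 4. -/
def Delta2 : MvPolynomial (Fin 2) ℂ :=
  Bbar2 d t ^ 2 - 4 * Abar2 d t * Cbar2 d t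

/-- `[a:b] ∈ ℙ¹(ℂ)` is a double root of the homogeneous polynomial `p`:
`(bX - aY)²` divides `p(X,Y)`. -/
def IsDoubleRootAt (a b : ℂ) (p : MvPolynomial (Fin 2) ℂ) : Prop :=
  (C b * X 0 - C a * X 1) ^ 2 ∣ p

/-- The step set of the model is included in a closed half plane whose boundary passes
through the origin. -/
def StepSetInHalfPlane : Prop :=
  ∃ u v : ℝ, (u, v) ≠ (0, 0) ∧
    ∀ i ∈ ({-1, 0, 1} : Set ℤ), ∀ j ∈ ({-1, 0, 1} : Set ℤ),
      (i, j) ≠ (0, 0) → d i j ≠ 0 → 0 ≤ u * (i : ℝ) + v * (j : ℝ)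

/-- `α₂ = β₂` for the first family of (G0). -/
def alpha2 : ℝ := 1 - 2*t*(d 0 0) + t^2*(d 0 0)^2 - 4*t^2*(d (-1) 1)*(d 1 (-1))

/-- `α₃` for the first family of (G0). -/
def alpha3 : ℝ := 2*t^2*(d 1 0)*(d 0 0) - 2*t*(d 1 0) - 4*t^2*(d 0 1)*(d 1 (-1))

/-- `α₄` for the first family of (G0). -/
def alpha4 : ℝ := t^2*((d 1 0)^2 - 4*(d 1 1)*(d 1 (-1)))

/-- `β₃` for the first family of (G0). -/
def beta3 : ℝ := 2*t^2*(d 0 1)*(d 0 0) - 2*t*(d 0 1) - 4*t^2*(d 1 0)*(d (-1) 1)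

/-- `β₄` for the first family of (G0). -/
def beta4 : ℝ := t^2*((d 0 1)^2 - 4*(d 1 1)*(d (-1) 1))

/-- The kernel polynomial as a function `ℂ × ℂ → ℂ`:
`K(x,y,t) = xy - t Σ_{i,j=0}^{2} d_{i-1,j-1} x^i y^j`. -/
def kernelKfun (x y : ℂ) : ℂ :=
  x * y - ((t : ℝ) : ℂ) *
    ∑ i ∈ Finset.range 3, ∑ j ∈ Finset.range 3,
      ((d ((i : ℤ) - 1) ((j : ℤ) - 1) : ℝ) : ℂ) * x ^ i * y ^ j

/-! ### Auxiliary lemmas for the proof -/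

section AuxProof

lemma mz {X Y : ℂ} (h : X * Y = 0) (hY : Y ≠ 0) : X = 0 :=
  (mul_eq_zero.1 h).resolve_right hY

lemma mz2 {X Y : ℂ} (h : X * Y ^ 2 = 0) (hY : Y ≠ 0) : X = 0 :=
  mz h (pow_ne_zero _ hY)

lemma quad_unique_grad (A B C c e : ℂ) (h0 : ¬(c = 0 ∧ e = 0))
    (hroot : A*c^2 + B*(c*e) + C*e^2 = 0)
    (hu : ∀ c' e' : ℂ, ¬(c' = 0 ∧ e' = 0) → A*c'^2 + B*(c'*e') + C*e'^2 = 0 →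
      ∃ mu : ℂ, mu ≠ 0 ∧ c' = mu * c ∧ e' = mu * e) :
    2*A*c + B*e = 0 ∧ B*c + 2*C*e = 0 := by
  by_cases he : e = 0
  · subst he
    have hc : c ≠ 0 := fun h => h0 ⟨h, rfl⟩
    have hA : A = 0 := mz2 (by linear_combination hroot) hc
    have hB : B = 0 := by
      by_contra hB
      obtain ⟨mu, hmu, h1, h2⟩ := hu C (-B) (fun h => hB (by simpa using h.2))
        (by linear_combination C^2 * hA)
      exact hB (by simpa using h2)
    simp [hA, hB]
  · have hA : A ≠ 0 := by
      intro hA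
      obtain ⟨mu, hmu, h1, h2⟩ := hu 1 0 (by simp) (by simp [hA])
      exact he ((mul_eq_zero.1 h2.symm).resolve_left hmu)
    obtain ⟨mu, hmu, h1, h2⟩ := hu (-(B*e + A*c)) (A*e) (fun h => (mul_ne_zero hA he) h.2)
      (by linear_combination A^2 * hroot)
    have hmuA : mu = A := by
      have h3 : (mu - A) * e = 0 := by linear_combination -h2
      linear_combination mz h3 he
    rw [hmuA] at h1
    have g1 : 2*A*c + B*e = 0 := by linear_combination -h1
    refine ⟨g1, ?_⟩
    exact mz (show (B*c + 2*C*e) * e = 0 by linear_combination (-c) * g1 + 2 * hroot) he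

lemma quad_grad_unique (A B C c e : ℂ) (h0 : ¬(c = 0 ∧ e = 0))
    (g1 : 2*A*c + B*e = 0) (g2 : B*c + 2*C*e = 0) (hQ : ¬(A = 0 ∧ B = 0 ∧ C = 0)) :
    ∀ c' e' : ℂ, ¬(c' = 0 ∧ e' = 0) → A*c'^2 + B*(c'*e') + C*e'^2 = 0 →
      ∃ mu : ℂ, mu ≠ 0 ∧ c' = mu * c ∧ e' = mu * e := by
  by_cases hA : A = 0
  · by_cases hB : B = 0
    · have hC : C ≠ 0 := fun h => hQ ⟨hA, hB, h⟩
      have he : e = 0 := mz (show e * C = 0 by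
        linear_combination (1/2 : ℂ) * g2 - (c/2) * hB) hC
      have hc : c ≠ 0 := fun h => h0 ⟨h, he⟩
      intro c' e' h0' hroot'
      have he' : e' = 0 := by
        have h3 : e' ^ 2 * C = 0 := by
          linear_combination hroot' - c'^2 * hA - (c'*e') * hB
        exact pow_eq_zero_iff two_ne_zero |>.1 (mz h3 hC)
      have hc' : c' ≠ 0 := fun h => h0' ⟨h, he'⟩
      exact ⟨c'/c, div_ne_zero hc' hc, by field_simp, by rw [he', he]; ring⟩
    · exfalso
      have he : e = 0 := mz (show e * B = 0 by linear_combination g1 - 2*c*hA) hB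
      have hc : c = 0 := mz (show c * B = 0 by linear_combination g2 - 2*C*he) hB
      exact h0 ⟨hc, he⟩
  · have he : e ≠ 0 := by
      intro h
      have hc : c = 0 := mz (show c * (2*A) = 0 by linear_combination g1 - B*h) (by simpa using hA)
      exact h0 ⟨hc, h⟩
    have hdisc : B^2 - 4*A*C = 0 := by
      have h5 : (B^2 - 4*A*C) * e^2 = 0 := by linear_combination (B*e) * g1 + (-2*A*e) * g2
      exact mz2 h5 he
    intro c' e' h0' hroot'
    have h4 : 2*A*c' + B*e' = 0 := by
      have hsq : (2*A*c' + B*e')^2 = 0 := by linear_combination 4*A*hroot' + e'^2 * hdisc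
      exact pow_eq_zero_iff two_ne_zero |>.1 hsq
    have he' : e' ≠ 0 := by
      intro h
      have hc' : c' = 0 := mz (show c' * (2*A) = 0 by linear_combination h4 - B*h) (by simpa using hA)
      exact h0' ⟨hc', h⟩
    refine ⟨e'/e, div_ne_zero he' he, ?_, by field_simp⟩
    have hcc : c'*e = c*e' := by
      have h5 : (c'*e - c*e') * (2*A) = 0 := by linear_combination e*h4 - e'*g1
      linear_combination mz h5 (by simpa using hA)
    field_simp
    linear_combination hcc

lemma not_isUnit_of_eval_zero (v : Fin 2 → ℂ) (p : MvPolynomial (Fin 2) ℂ)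
    (h : eval v p = 0) : ¬ IsUnit p := fun hu =>
  (isUnit_iff_ne_zero.mp (hu.map (eval v))) h

lemma exists_ne_lin (α β : ℂ) (h : ¬(α = 0 ∧ β = 0)) : ∃ x : ℂ, α * x + β ≠ 0 := by
  by_cases hα : α = 0
  · exact ⟨0, by simpa [hα] using fun hβ => h ⟨hα, hβ⟩⟩
  · refine ⟨(1 - β)/α, ?_⟩
    have : α * ((1 - β)/α) + β = 1 := by field_simp; ring
    simp [this]

lemma exists_root_quad (Aq Bq Cq : ℂ) (hA : Aq ≠ 0) : ∃ y : ℂ, Aq*y^2 + Bq*y + Cq = 0 := by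
  obtain ⟨z, hz⟩ := IsAlgClosed.exists_pow_nat_eq (Bq^2 - 4*Aq*Cq) (n := 2) two_pos
  refine ⟨(-Bq + z)/(2*Aq), ?_⟩
  have h2 : (2*Aq) ≠ 0 := by simpa using hA
  field_simp
  ring_nf
  linear_combination hz

lemma degOf_term_le1 (r : ℂ) (i j k : ℕ) (h : j ≤ k) :
    degreeOf 1 (C r * X 0 ^ i * X 1 ^ j : MvPolynomial (Fin 2) ℂ) ≤ k := by
  rcases eq_or_ne r 0 with rfl | hr
  · simp
  · have heq : (C r * X 0 ^ i * X 1 ^ j : MvPolynomial (Fin 2) ℂ)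
        = monomial (Finsupp.single 0 i + Finsupp.single 1 j) r := by
      rw [X_pow_eq_monomial, X_pow_eq_monomial, C_apply, monomial_mul, monomial_mul]
      simp
    rw [heq, degreeOf_monomial_eq _ _ hr]
    simpa using h

lemma degOf_term_le0 (r : ℂ) (i j k : ℕ) (h : i ≤ k) :
    degreeOf 0 (C r * X 0 ^ i * X 1 ^ j : MvPolynomial (Fin 2) ℂ) ≤ k := by
  rcases eq_or_ne r 0 with rfl | hr
  · simp
  · have heq : (C r * X 0 ^ i * X 1 ^ j : MvPolynomial (Fin 2) ℂ)
        = monomial (Finsupp.single 0 i + Finsupp.single 1 j) r := by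
      rw [X_pow_eq_monomial, X_pow_eq_monomial, C_apply, monomial_mul, monomial_mul]
      simp
    rw [heq, degreeOf_monomial_eq _ _ hr]
    simpa using h

def A1c (a b : ℂ) : ℂ :=
  -((t:ℝ):ℂ) * (((d (-1) 1 :ℝ):ℂ) * b^2 + ((d 0 1 :ℝ):ℂ) * (a*b) + ((d 1 1 :ℝ):ℂ) * a^2)
def B1c (a b : ℂ) : ℂ :=
  a*b - ((t:ℝ):ℂ) * (((d (-1) 0 :ℝ):ℂ) * b^2 + ((d 0 0 :ℝ):ℂ) * (a*b) + ((d 1 0 :ℝ):ℂ) * a^2)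
def C1c (a b : ℂ) : ℂ :=
  -((t:ℝ):ℂ) * (((d (-1) (-1) :ℝ):ℂ) * b^2 + ((d 0 (-1) :ℝ):ℂ) * (a*b) + ((d 1 (-1) :ℝ):ℂ) * a^2)
def A2c (c e : ℂ) : ℂ :=
  -((t:ℝ):ℂ) * (((d 1 (-1) :ℝ):ℂ) * e^2 + ((d 1 0 :ℝ):ℂ) * (c*e) + ((d 1 1 :ℝ):ℂ) * c^2)
def B2c (c e : ℂ) : ℂ :=
  c*e - ((t:ℝ):ℂ) * (((d 0 (-1) :ℝ):ℂ) * e^2 + ((d 0 0 :ℝ):ℂ) * (c*e) + ((d 0 1 :ℝ):ℂ) * c^2)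
def C2c (c e : ℂ) : ℂ :=
  -((t:ℝ):ℂ) * (((d (-1) (-1) :ℝ):ℂ) * e^2 + ((d (-1) 0 :ℝ):ℂ) * (c*e) + ((d (-1) 1 :ℝ):ℂ) * c^2)

lemma evalKbar_y (a b c e : ℂ) :
    eval ![a,b,c,e] (kernelKbar d t) =
      A1c d t a b * c^2 + B1c d t a b * (c*e) + C1c d t a b * e^2 := by
  simp [kernelKbar, A1c, B1c, C1c, Finset.sum_range_succ]
  ring

lemma evalKbar_x (a b c e : ℂ) :
    eval ![a,b,c,e] (kernelKbar d t) =
      A2c d t c e * a^2 + B2c d t c e * (a*b) + C2c d t c e * b^2 := by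
  simp [kernelKbar, A2c, B2c, C2c, Finset.sum_range_succ]
  ring

lemma pdK0 (a b c e : ℂ) :
    eval ![a,b,c,e] (pderiv 0 (kernelKbar d t)) =
      2 * A2c d t c e * a + B2c d t c e * b := by
  simp [kernelKbar, A2c, B2c, Finset.sum_range_succ, pderiv_X_self, pderiv_X_of_ne]
  ring

lemma pdK1 (a b c e : ℂ) :
    eval ![a,b,c,e] (pderiv 1 (kernelKbar d t)) =
      B2c d t c e * a + 2 * C2c d t c e * b := by
  simp [kernelKbar, B2c, C2c, Finset.sum_range_succ, pderiv_X_self, pderiv_X_of_ne]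
  ring

lemma pdK2 (a b c e : ℂ) :
    eval ![a,b,c,e] (pderiv 2 (kernelKbar d t)) =
      2 * A1c d t a b * c + B1c d t a b * e := by
  simp [kernelKbar, A1c, B1c, Finset.sum_range_succ, pderiv_X_self, pderiv_X_of_ne]
  ring

lemma pdK3 (a b c e : ℂ) :
    eval ![a,b,c,e] (pderiv 3 (kernelKbar d t)) =
      B1c d t a b * c + 2 * C1c d t a b * e := by
  simp [kernelKbar, B1c, C1c, Finset.sum_range_succ, pderiv_X_self, pderiv_X_of_ne]
  ring

lemma deg1_le (h1 : ((d (-1) 1 : ℝ) : ℂ) = 0) (h2 : ((d 0 1 : ℝ) : ℂ) = 0)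
    (h3 : ((d 1 1 : ℝ) : ℂ) = 0) : degreeOf 1 (kernelK d t) ≤ 1 := by
  have hK : kernelK d t =
      C (1:ℂ) * X 0 ^ 1 * X 1 ^ 1 +
      (C (-((t:ℝ):ℂ) * ((d (-1) (-1) : ℝ):ℂ)) * X 0 ^ 0 * X 1 ^ 0
       + C (-((t:ℝ):ℂ) * ((d (-1) 0 : ℝ):ℂ)) * X 0 ^ 0 * X 1 ^ 1
       + C (-((t:ℝ):ℂ) * ((d 0 (-1) : ℝ):ℂ)) * X 0 ^ 1 * X 1 ^ 0
       + C (-((t:ℝ):ℂ) * ((d 0 0 : ℝ):ℂ)) * X 0 ^ 1 * X 1 ^ 1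
       + C (-((t:ℝ):ℂ) * ((d 1 (-1) : ℝ):ℂ)) * X 0 ^ 2 * X 1 ^ 0
       + C (-((t:ℝ):ℂ) * ((d 1 0 : ℝ):ℂ)) * X 0 ^ 2 * X 1 ^ 1) := by
    simp only [kernelK, Finset.sum_range_succ, Finset.sum_range_zero]
    norm_num [h1, h2, h3]
    ring
  rw [hK]
  refine le_trans (degreeOf_add_le _ _ _) ?_
  simp only [max_le_iff]
  refine ⟨degOf_term_le1 _ _ _ _ (by norm_num), ?_⟩
  refine le_trans (degreeOf_add_le _ _ _) ?_
  simp only [max_le_iff]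
  refine ⟨le_trans (degreeOf_add_le _ _ _) ?_, degOf_term_le1 _ _ _ _ (by norm_num)⟩
  simp only [max_le_iff]
  refine ⟨le_trans (degreeOf_add_le _ _ _) ?_, degOf_term_le1 _ _ _ _ (by norm_num)⟩
  simp only [max_le_iff]
  refine ⟨le_trans (degreeOf_add_le _ _ _) ?_, degOf_term_le1 _ _ _ _ (by norm_num)⟩
  simp only [max_le_iff]
  refine ⟨le_trans (degreeOf_add_le _ _ _) ?_, degOf_term_le1 _ _ _ _ (by norm_num)⟩
  simp only [max_le_iff]
  exact ⟨degOf_term_le1 _ _ _ _ (by norm_num), degOf_term_le1 _ _ _ _ (by norm_num)⟩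

lemma deg0_le (h1 : ((d 1 (-1) : ℝ) : ℂ) = 0) (h2 : ((d 1 0 : ℝ) : ℂ) = 0)
    (h3 : ((d 1 1 : ℝ) : ℂ) = 0) : degreeOf 0 (kernelK d t) ≤ 1 := by
  have hK : kernelK d t =
      C (1:ℂ) * X 0 ^ 1 * X 1 ^ 1 +
      (C (-((t:ℝ):ℂ) * ((d (-1) (-1) : ℝ):ℂ)) * X 0 ^ 0 * X 1 ^ 0
       + C (-((t:ℝ):ℂ) * ((d (-1) 0 : ℝ):ℂ)) * X 0 ^ 0 * X 1 ^ 1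
       + C (-((t:ℝ):ℂ) * ((d (-1) 1 : ℝ):ℂ)) * X 0 ^ 0 * X 1 ^ 2
       + C (-((t:ℝ):ℂ) * ((d 0 (-1) : ℝ):ℂ)) * X 0 ^ 1 * X 1 ^ 0
       + C (-((t:ℝ):ℂ) * ((d 0 0 : ℝ):ℂ)) * X 0 ^ 1 * X 1 ^ 1
       + C (-((t:ℝ):ℂ) * ((d 0 1 : ℝ):ℂ)) * X 0 ^ 1 * X 1 ^ 2) := by
    simp only [kernelK, Finset.sum_range_succ, Finset.sum_range_zero]
    norm_num [h1, h2, h3]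
    ring
  rw [hK]
  refine le_trans (degreeOf_add_le _ _ _) ?_
  simp only [max_le_iff]
  refine ⟨degOf_term_le0 _ _ _ _ (by norm_num), ?_⟩
  refine le_trans (degreeOf_add_le _ _ _) ?_
  simp only [max_le_iff]
  refine ⟨le_trans (degreeOf_add_le _ _ _) ?_, degOf_term_le0 _ _ _ _ (by norm_num)⟩
  simp only [max_le_iff]
  refine ⟨le_trans (degreeOf_add_le _ _ _) ?_, degOf_term_le0 _ _ _ _ (by norm_num)⟩
  simp only [max_le_iff]
  refine ⟨le_trans (degreeOf_add_le _ _ _) ?_, degOf_term_le0 _ _ _ _ (by norm_num)⟩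
  simp only [max_le_iff]
  refine ⟨le_trans (degreeOf_add_le _ _ _) ?_, degOf_term_le0 _ _ _ _ (by norm_num)⟩
  simp only [max_le_iff]
  exact ⟨degOf_term_le0 _ _ _ _ (by norm_num), degOf_term_le0 _ _ _ _ (by norm_num)⟩

lemma nd_y (ht : 0 < t) (hnd : ¬ Degenerate d t) (a b : ℂ) (hab : ¬(a = 0 ∧ b = 0)) :
    ¬(A1c d t a b = 0 ∧ B1c d t a b = 0 ∧ C1c d t a b = 0) := by
  have hT : ((t:ℝ):ℂ) ≠ 0 := by
    simp only [ne_eq, Complex.ofReal_eq_zero]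
    exact ne_of_gt ht
  have hIrr : Irreducible (kernelK d t) := by
    by_contra hc; exact hnd (Or.inl hc)
  have hd0 : ¬ (degreeOf 0 (kernelK d t) ≤ 1) := fun hh => hnd (Or.inr (Or.inl hh))
  have hd1 : ¬ (degreeOf 1 (kernelK d t) ≤ 1) := fun hh => hnd (Or.inr (Or.inr hh))
  rintro ⟨hz1, hz2, hz3⟩
  simp only [A1c, B1c, C1c] at hz1 hz2 hz3
  by_cases hb : b = 0
  · subst hb
    have ha : a ≠ 0 := fun h => hab ⟨h, rfl⟩
    have ha2 : ((t:ℝ):ℂ) * a^2 ≠ 0 := mul_ne_zero hT (pow_ne_zero _ ha)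
    exact hd0 (deg0_le d t
      (mz (show ((d 1 (-1):ℝ):ℂ) * (((t:ℝ):ℂ) * a^2) = 0 by linear_combination -hz3) ha2)
      (mz (show ((d 1 0:ℝ):ℂ) * (((t:ℝ):ℂ) * a^2) = 0 by linear_combination -hz2) ha2)
      (mz (show ((d 1 1:ℝ):ℂ) * (((t:ℝ):ℂ) * a^2) = 0 by linear_combination -hz1) ha2))
  · set T : ℂ := ((t:ℝ):ℂ) with hTdef
    set G : MvPolynomial (Fin 2) ℂ :=
      (C (b*(-T*((d 1 (-1):ℝ):ℂ))) * X 0 + C (b*(-T*((d 0 (-1):ℝ):ℂ)) + a*(-T*((d 1 (-1):ℝ):ℂ))))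
      + (C (b*(-T*((d 1 0:ℝ):ℂ))) * X 0 + C (b*(1-T*((d 0 0:ℝ):ℂ)) + a*(-T*((d 1 0:ℝ):ℂ)))) * X 1
      + (C (b*(-T*((d 1 1:ℝ):ℂ))) * X 0 + C (b*(-T*((d 0 1:ℝ):ℂ)) + a*(-T*((d 1 1:ℝ):ℂ)))) * X 1^2
      with hGdef
    have hz1' := congrArg (MvPolynomial.C : ℂ → MvPolynomial (Fin 2) ℂ) hz1
    have hz2' := congrArg (MvPolynomial.C : ℂ → MvPolynomial (Fin 2) ℂ) hz2
    have hz3' := congrArg (MvPolynomial.C : ℂ → MvPolynomial (Fin 2) ℂ) hz3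
    simp only [map_mul, map_add, map_neg, map_sub, map_pow, map_one, map_zero] at hz1' hz2' hz3'
    have hfac : C (b^2) * kernelK d t = (C b * X 0 - C a) * G := by
      rw [hGdef]
      simp only [kernelK, Finset.sum_range_succ, Finset.sum_range_zero]
      norm_num
      linear_combination hz1' * X 1 ^ 2 + hz2' * X 1 + hz3'
    have hb2 : (b^2 : ℂ) ≠ 0 := pow_ne_zero _ hb
    have hKfac : kernelK d t = (C b * X 0 - C a) * (C ((b^2)⁻¹) * G) := by
      calc kernelK d t = C ((b^2)⁻¹) * (C (b^2) * kernelK d t) := by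
            rw [← mul_assoc, ← C_mul, inv_mul_cancel₀ hb2, C_1, one_mul]
        _ = C ((b^2)⁻¹) * ((C b * X 0 - C a) * G) := by rw [hfac]
        _ = (C b * X 0 - C a) * (C ((b^2)⁻¹) * G) := by ring
    have hu1 : ¬ IsUnit (C b * X 0 - C a : MvPolynomial (Fin 2) ℂ) := by
      apply not_isUnit_of_eval_zero ![a/b, 0]
      simp only [map_sub, map_mul, eval_C, eval_X]
      simp only [Matrix.cons_val_zero]
      field_simp
      simp
    rcases hIrr.isUnit_or_isUnit hKfac with hU | hU
    · exact hu1 hU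
    · by_cases hαβ : b*(-T*((d 1 1:ℝ):ℂ)) = 0 ∧ (b*(-T*((d 0 1:ℝ):ℂ)) + a*(-T*((d 1 1:ℝ):ℂ))) = 0
      · have h11 : ((d 1 1:ℝ):ℂ) = 0 :=
          mz (show ((d 1 1:ℝ):ℂ) * (-(T*b)) = 0 by linear_combination hαβ.1)
            (neg_ne_zero.2 (mul_ne_zero hT hb))
        have h01 : ((d 0 1:ℝ):ℂ) = 0 := by
          have hh : ((d 0 1:ℝ):ℂ) * (-(T*b)) = 0 := by linear_combination hαβ.2 - a*(-T)*h11
          exact mz hh (neg_ne_zero.2 (mul_ne_zero hT hb))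
        have hm11 : ((d (-1) 1:ℝ):ℂ) = 0 := by
          have hh : ((d (-1) 1:ℝ):ℂ) * (-(T*b^2)) = 0 := by
            linear_combination hz1 - ((a*b)*(-T))*h01 - (a^2*(-T))*h11
          exact mz hh (neg_ne_zero.2 (mul_ne_zero hT hb2))
        exact hd1 (deg1_le d t hm11 h01 h11)
      · obtain ⟨x₀, hx₀⟩ := exists_ne_lin _ _ hαβ
        obtain ⟨y₀, hy₀⟩ := exists_root_quad
          (b*(-T*((d 1 1:ℝ):ℂ))*x₀ + (b*(-T*((d 0 1:ℝ):ℂ)) + a*(-T*((d 1 1:ℝ):ℂ))))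
          (b*(-T*((d 1 0:ℝ):ℂ))*x₀ + (b*(1-T*((d 0 0:ℝ):ℂ)) + a*(-T*((d 1 0:ℝ):ℂ))))
          (b*(-T*((d 1 (-1):ℝ):ℂ))*x₀ + (b*(-T*((d 0 (-1):ℝ):ℂ)) + a*(-T*((d 1 (-1):ℝ):ℂ)))) hx₀
        have hGz : eval ![x₀, y₀] G = 0 := by
          rw [hGdef]
          simp only [map_add, map_mul, map_pow, eval_C, eval_X, Matrix.cons_val_zero,
            Matrix.cons_val_one, Matrix.head_cons]
          linear_combination hy₀
        exact not_isUnit_of_eval_zero ![x₀, y₀] _ (by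
          simp only [map_mul, eval_C, hGz, mul_zero]) hU

lemma nd_x (ht : 0 < t) (hnd : ¬ Degenerate d t) (c e : ℂ) (hce : ¬(c = 0 ∧ e = 0)) :
    ¬(A2c d t c e = 0 ∧ B2c d t c e = 0 ∧ C2c d t c e = 0) := by
  have hT : ((t:ℝ):ℂ) ≠ 0 := by
    simp only [ne_eq, Complex.ofReal_eq_zero]
    exact ne_of_gt ht
  have hIrr : Irreducible (kernelK d t) := by
    by_contra hc; exact hnd (Or.inl hc)
  have hd0 : ¬ (degreeOf 0 (kernelK d t) ≤ 1) := fun hh => hnd (Or.inr (Or.inl hh))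
  have hd1 : ¬ (degreeOf 1 (kernelK d t) ≤ 1) := fun hh => hnd (Or.inr (Or.inr hh))
  rintro ⟨hz1, hz2, hz3⟩
  simp only [A2c, B2c, C2c] at hz1 hz2 hz3
  by_cases he : e = 0
  · subst he
    have hc : c ≠ 0 := fun h => hce ⟨h, rfl⟩
    have hc2 : ((t:ℝ):ℂ) * c^2 ≠ 0 := mul_ne_zero hT (pow_ne_zero _ hc)
    exact hd1 (deg1_le d t
      (mz (show ((d (-1) 1:ℝ):ℂ) * (((t:ℝ):ℂ) * c^2) = 0 by linear_combination -hz3) hc2)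
      (mz (show ((d 0 1:ℝ):ℂ) * (((t:ℝ):ℂ) * c^2) = 0 by linear_combination -hz2) hc2)
      (mz (show ((d 1 1:ℝ):ℂ) * (((t:ℝ):ℂ) * c^2) = 0 by linear_combination -hz1) hc2))
  · set T : ℂ := ((t:ℝ):ℂ) with hTdef
    set G : MvPolynomial (Fin 2) ℂ :=
      (C (e*(-T*((d (-1) 1:ℝ):ℂ))) * X 1 + C (e*(-T*((d (-1) 0:ℝ):ℂ)) + c*(-T*((d (-1) 1:ℝ):ℂ))))
      + (C (e*(-T*((d 0 1:ℝ):ℂ))) * X 1 + C (e*(1-T*((d 0 0:ℝ):ℂ)) + c*(-T*((d 0 1:ℝ):ℂ)))) * X 0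
      + (C (e*(-T*((d 1 1:ℝ):ℂ))) * X 1 + C (e*(-T*((d 1 0:ℝ):ℂ)) + c*(-T*((d 1 1:ℝ):ℂ)))) * X 0^2
      with hGdef
    have hz1' := congrArg (MvPolynomial.C : ℂ → MvPolynomial (Fin 2) ℂ) hz1
    have hz2' := congrArg (MvPolynomial.C : ℂ → MvPolynomial (Fin 2) ℂ) hz2
    have hz3' := congrArg (MvPolynomial.C : ℂ → MvPolynomial (Fin 2) ℂ) hz3
    simp only [map_mul, map_add, map_neg, map_sub, map_pow, map_one, map_zero] at hz1' hz2' hz3'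
    have hfac : C (e^2) * kernelK d t = (C e * X 1 - C c) * G := by
      rw [hGdef]
      simp only [kernelK, Finset.sum_range_succ, Finset.sum_range_zero]
      norm_num
      linear_combination hz1' * X 0 ^ 2 + hz2' * X 0 + hz3'
    have he2 : (e^2 : ℂ) ≠ 0 := pow_ne_zero _ he
    have hKfac : kernelK d t = (C e * X 1 - C c) * (C ((e^2)⁻¹) * G) := by
      calc kernelK d t = C ((e^2)⁻¹) * (C (e^2) * kernelK d t) := by
            rw [← mul_assoc, ← C_mul, inv_mul_cancel₀ he2, C_1, one_mul]
        _ = C ((e^2)⁻¹) * ((C e * X 1 - C c) * G) := by rw [hfac]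
        _ = (C e * X 1 - C c) * (C ((e^2)⁻¹) * G) := by ring
    have hu1 : ¬ IsUnit (C e * X 1 - C c : MvPolynomial (Fin 2) ℂ) := by
      apply not_isUnit_of_eval_zero ![0, c/e]
      simp only [map_sub, map_mul, eval_C, eval_X]
      simp only [Matrix.cons_val_one, Matrix.head_cons]
      simp only [Matrix.cons_val_zero]
      field_simp
      simp
    rcases hIrr.isUnit_or_isUnit hKfac with hU | hU
    · exact hu1 hU
    · by_cases hαβ : e*(-T*((d 1 1:ℝ):ℂ)) = 0 ∧ (e*(-T*((d 1 0:ℝ):ℂ)) + c*(-T*((d 1 1:ℝ):ℂ))) = 0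
      · have h11 : ((d 1 1:ℝ):ℂ) = 0 :=
          mz (show ((d 1 1:ℝ):ℂ) * (-(T*e)) = 0 by linear_combination hαβ.1)
            (neg_ne_zero.2 (mul_ne_zero hT he))
        have h10 : ((d 1 0:ℝ):ℂ) = 0 := by
          have hh : ((d 1 0:ℝ):ℂ) * (-(T*e)) = 0 := by linear_combination hαβ.2 - c*(-T)*h11
          exact mz hh (neg_ne_zero.2 (mul_ne_zero hT he))
        have h1m1 : ((d 1 (-1):ℝ):ℂ) = 0 := by
          have hh : ((d 1 (-1):ℝ):ℂ) * (-(T*e^2)) = 0 := by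
            linear_combination hz1 - ((c*e)*(-T))*h10 - (c^2*(-T))*h11
          exact mz hh (neg_ne_zero.2 (mul_ne_zero hT he2))
        exact hd0 (deg0_le d t h1m1 h10 h11)
      · obtain ⟨y₀, hy₀⟩ := exists_ne_lin _ _ hαβ
        obtain ⟨x₀, hx₀⟩ := exists_root_quad
          (e*(-T*((d 1 1:ℝ):ℂ))*y₀ + (e*(-T*((d 1 0:ℝ):ℂ)) + c*(-T*((d 1 1:ℝ):ℂ))))
          (e*(-T*((d 0 1:ℝ):ℂ))*y₀ + (e*(1-T*((d 0 0:ℝ):ℂ)) + c*(-T*((d 0 1:ℝ):ℂ))))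
          (e*(-T*((d (-1) 1:ℝ):ℂ))*y₀ + (e*(-T*((d (-1) 0:ℝ):ℂ)) + c*(-T*((d (-1) 1:ℝ):ℂ)))) hy₀
        have hGz : eval ![x₀, y₀] G = 0 := by
          rw [hGdef]
          simp only [map_add, map_mul, map_pow, eval_C, eval_X, Matrix.cons_val_zero,
            Matrix.cons_val_one, Matrix.head_cons]
          linear_combination hx₀
        exact not_isUnit_of_eval_zero ![x₀, y₀] _ (by
          simp only [map_mul, eval_C, hGz, mul_zero]) hU

end AuxProof


/-- for a nondegenerate model and a point `P = ([a:b],[c:e])` of `Ē_t`,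
`P` is a singular point of `Ē_t` iff `P` is both the unique point of `Ē_t` sharing its
first coordinate and the unique point of `Ē_t` sharing its second coordinate
(i.e. `P` is fixed by both the vertical switch `ι₁` and the horizontal switch `ι₂`). -/
theorem singular_iff_fixed_by_both_switches (h : WalkHyp d t) (hnd : ¬ Degenerate d t)
    (a b c e : ℂ) (hab : (a, b) ≠ (0, 0)) (hce : (c, e) ≠ (0, 0))
    (hon : OnKernelCurve d t a b c e) :
    SingularAt d t a b c e ↔
      ((∀ c' e' : ℂ, (c', e') ≠ (0, 0) → OnKernelCurve d t a b c' e' →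
          ∃ mu : ℂ, mu ≠ 0 ∧ c' = mu * c ∧ e' = mu * e) ∧
       (∀ a' b' : ℂ, (a', b') ≠ (0, 0) → OnKernelCurve d t a' b' c e →
          ∃ lam : ℂ, lam ≠ 0 ∧ a' = lam * a ∧ b' = lam * b)) := by
  have ht0 : 0 < t := h.2.2.1.1
  have hab' : ¬(a = 0 ∧ b = 0) := fun hh => hab (by rw [hh.1, hh.2])
  have hce' : ¬(c = 0 ∧ e = 0) := fun hh => hce (by rw [hh.1, hh.2])
  have honv : eval ![a,b,c,e] (kernelKbar d t) = 0 := hon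
  have hroot_y : A1c d t a b * c^2 + B1c d t a b * (c*e) + C1c d t a b * e^2 = 0 := by
    rw [← evalKbar_y]; exact honv
  have hroot_x : A2c d t c e * a^2 + B2c d t c e * (a*b) + C2c d t c e * b^2 = 0 := by
    rw [← evalKbar_x]; exact honv
  constructor
  · rintro ⟨-, hpd⟩
    have g0 := hpd 0; rw [pdK0] at g0
    have g1 := hpd 1; rw [pdK1] at g1
    have g2 := hpd 2; rw [pdK2] at g2
    have g3 := hpd 3; rw [pdK3] at g3
    constructor
    · intro c' e' hne hon'
      have hne' : ¬(c' = 0 ∧ e' = 0) := fun hh => hne (by rw [hh.1, hh.2])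
      have hroot' : A1c d t a b * c'^2 + B1c d t a b * (c'*e') + C1c d t a b * e'^2 = 0 := by
        rw [← evalKbar_y]; exact hon'
      obtain ⟨mu, hmu, h1, h2⟩ := quad_grad_unique _ _ _ c e hce' g2 g3
        (nd_y d t ht0 hnd a b hab') c' e' hne' hroot'
      exact ⟨mu, hmu, h1, h2⟩
    · intro a' b' hne hon'
      have hne' : ¬(a' = 0 ∧ b' = 0) := fun hh => hne (by rw [hh.1, hh.2])
      have hroot' : A2c d t c e * a'^2 + B2c d t c e * (a'*b') + C2c d t c e * b'^2 = 0 := by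
        rw [← evalKbar_x]; exact hon'
      obtain ⟨lam, hlam, h1, h2⟩ := quad_grad_unique _ _ _ a b hab' g0 g1
        (nd_x d t ht0 hnd c e hce') a' b' hne' hroot'
      exact ⟨lam, hlam, h1, h2⟩
  · rintro ⟨huy, hux⟩
    have huy' : ∀ c' e' : ℂ, ¬(c' = 0 ∧ e' = 0) →
        A1c d t a b * c'^2 + B1c d t a b * (c'*e') + C1c d t a b * e'^2 = 0 →
        ∃ mu : ℂ, mu ≠ 0 ∧ c' = mu * c ∧ e' = mu * e := by
      intro c' e' hne hr
      exact huy c' e' (fun heq => hne ⟨congrArg Prod.fst heq, congrArg Prod.snd heq⟩)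
        (show eval ![a,b,c',e'] (kernelKbar d t) = 0 by rw [evalKbar_y]; exact hr)
    have hux' : ∀ a' b' : ℂ, ¬(a' = 0 ∧ b' = 0) →
        A2c d t c e * a'^2 + B2c d t c e * (a'*b') + C2c d t c e * b'^2 = 0 →
        ∃ lam : ℂ, lam ≠ 0 ∧ a' = lam * a ∧ b' = lam * b := by
      intro a' b' hne hr
      exact hux a' b' (fun heq => hne ⟨congrArg Prod.fst heq, congrArg Prod.snd heq⟩)
        (show eval ![a',b',c,e] (kernelKbar d t) = 0 by rw [evalKbar_x]; exact hr)
    obtain ⟨g2, g3⟩ := quad_unique_grad _ _ _ c e hce' hroot_y huy'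
    obtain ⟨g0, g1⟩ := quad_unique_grad _ _ _ a b hab' hroot_x hux'
    refine ⟨hon, ?_⟩
    intro k
    fin_cases k
    · rw [show (⟨0, by norm_num⟩ : Fin 4) = 0 from rfl, pdK0]; exact g0
    · rw [show (⟨1, by norm_num⟩ : Fin 4) = 1 from rfl, pdK1]; exact g1
    · rw [show (⟨2, by norm_num⟩ : Fin 4) = 2 from rfl, pdK2]; exact g2
    · rw [show (⟨3, by norm_num⟩ : Fin 4) = 3 from rfl, pdK3]; exact g3

end
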